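/- Let $\hat Y^{\epsilon_1},\hat Y^{\epsilon_2}$ be two solutions of the $M=2$ continuum Schelling equation on a region $J$, with $\hat Y^{\epsilon_i}(x,t)=\hat B(x)+y_i(x,t)$ where each $y_i(\cdot,t)$ is Lipschitz with constant $2t$. Define $h(t)=\inf_{x\in J}(\hat Y^{\epsilon_1}(x,t)-\hat Y^{\epsilon_2}(x,t))$ and $\ell(t)=\inf\{|x-x'|:x,x'\in J,\ \hat Y^{\epsilon_1}(x,t)<0,\ \hat Y^{\epsilon_2}(x',t)>0\}$ (infimum over empty set $=\infty$). Let $c_1=\sup_{x,x'\in J}|\hat B(x)-\hat B(x')|$. Then $\ell(t)\ge\frac{h(t)-c_1}{2t}$ for all $t>0$. If moreover $\hat B$ is $1/3$-Hölder on $J$ with constant $c_2$ and $h$ is nondecreasing with $h(0)\ge\epsilon_1-\epsilon_2>0$, then with $c_0=\big(\frac{\epsilon_1-\epsilon_2}{1000c_2}\big)^3$ one also has $\ell(t)\ge\min\{c_0,\frac{h(t)}{2.01t}\}$, and hence $\ell(t)\ge\max\{\frac{h(t)-c_1}{2t},\min\{c_0,\frac{h(t)}{2.01t}\}\}$. -/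

import Mathlib

/-- Separation estimates between the zero sets of two ordered solutions of the `M = 2`
continuum Schelling equation (Lemma 2.17 of Holden–Sheffield): with
`h(t) = inf_J (Ŷ^{ε₁} - Ŷ^{ε₂})` and `ℓ(t)` the minimal distance between a point of `J` where
`Ŷ^{ε₁} < 0` and one where `Ŷ^{ε₂} > 0`, one has `ℓ(t) ≥ (h(t) - c₁)/(2t)`, and, under a
`1/3`-Hölder assumption on `B̂`, also `ℓ(t) ≥ min{c₀, h(t)/(2.01 t)}` with
`c₀ = ((ε₁-ε₂)/(1000 c₂))³`. -/
theorem stmt18 (ε1 ε2 : ℝ) (hε : ε2 < ε1)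
    (J : Set ℝ) (Bh : ℝ → ℝ) (y1 y2 : ℝ → ℝ → ℝ)
    (Y1 Y2 : ℝ → ℝ → ℝ)
    (hY1 : ∀ x t : ℝ, Y1 x t = Bh x + y1 x t)
    (hY2 : ∀ x t : ℝ, Y2 x t = Bh x + y2 x t)
    (hLip1 : ∀ t : ℝ, 0 ≤ t → ∀ x ∈ J, ∀ x' ∈ J,
      |y1 x t - y1 x' t| ≤ 2 * t * |x - x'|)
    (hLip2 : ∀ t : ℝ, 0 ≤ t → ∀ x ∈ J, ∀ x' ∈ J,
      |y2 x t - y2 x' t| ≤ 2 * t * |x - x'|)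
    (h : ℝ → ℝ)
    (hh : ∀ t : ℝ, 0 ≤ t → ∀ x ∈ J, h t ≤ Y1 x t - Y2 x t)
    (c1 : ℝ) (hc1 : ∀ x ∈ J, ∀ x' ∈ J, |Bh x - Bh x'| ≤ c1) :
    (∀ t : ℝ, 0 < t → ∀ x ∈ J, ∀ x' ∈ J,
      Y1 x t < 0 → 0 < Y2 x' t → (h t - c1) / (2 * t) ≤ |x - x'|) ∧
    (∀ c2 : ℝ, 0 < c2 →
      (∀ x ∈ J, ∀ x' ∈ J, |Bh x - Bh x'| ≤ c2 * |x - x'| ^ ((1 : ℝ) / 3)) →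
      Monotone h → ε1 - ε2 ≤ h 0 →
      ∀ t : ℝ, 0 < t → ∀ x ∈ J, ∀ x' ∈ J,
        Y1 x t < 0 → 0 < Y2 x' t →
        min (((ε1 - ε2) / (1000 * c2)) ^ (3 : ℕ)) (h t / (2.01 * t)) ≤ |x - x'|) := by
  constructor
  · intro t ht x hx x' hx' h1 h2
    have hd := hLip1 t ht.le x' hx' x hx
    have hB := hc1 x' hx' x hx
    have hhx' := hh t ht.le x' hx'
    have e1 : y1 x' t - y1 x t ≤ 2 * t * |x - x'| := by
      rw [abs_sub_comm x x']
      calc y1 x' t - y1 x t ≤ |y1 x' t - y1 x t| := le_abs_self _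
        _ ≤ 2 * t * |x' - x| := hd
    have e2 : Bh x' - Bh x ≤ c1 := le_trans (le_abs_self _) hB
    rw [hY1] at h1
    rw [hY1, hY2] at hhx'
    rw [hY2] at h2
    rw [div_le_iff₀ (by positivity)]
    nlinarith
  · intro c2 hc2 hHol hmono hh0 t ht x hx x' hx' h1 h2
    by_contra hcon
    push_neg at hcon
    have hconc := lt_min_iff.mp hcon
    have hd0 : (0:ℝ) ≤ |x - x'| := abs_nonneg _
    have hεp : (0:ℝ) < ε1 - ε2 := by linarith
    have hap : (0:ℝ) < (ε1 - ε2) / (1000 * c2) := by positivity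
    have hht : ε1 - ε2 ≤ h t := le_trans hh0 (hmono ht.le)
    have hhtpos : 0 < h t := lt_of_lt_of_le hεp hht
    -- Hölder bound
    have hr : |x - x'| ^ ((1:ℝ)/3) ≤ (ε1 - ε2) / (1000 * c2) := by
      have h3 : ((((ε1 - ε2) / (1000 * c2)) ^ (3:ℕ) : ℝ)) ^ ((1:ℝ)/3)
          = (ε1 - ε2) / (1000 * c2) := by
        rw [← Real.rpow_natCast ((ε1 - ε2) / (1000 * c2)) 3, ← Real.rpow_mul hap.le]
        norm_num
      calc |x - x'| ^ ((1:ℝ)/3)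
          ≤ ((((ε1 - ε2) / (1000 * c2)) ^ (3:ℕ) : ℝ)) ^ ((1:ℝ)/3) :=
            Real.rpow_le_rpow hd0 hconc.1.le (by norm_num)
        _ = _ := h3
    have eB : Bh x' - Bh x ≤ c2 * |x - x'| ^ ((1:ℝ)/3) := by
      have := hHol x' hx' x hx
      rw [abs_sub_comm x x']
      exact le_trans (le_abs_self _) this
    have eB2 : Bh x' - Bh x ≤ h t / 1000 := by
      have : c2 * |x - x'| ^ ((1:ℝ)/3) ≤ c2 * ((ε1 - ε2) / (1000 * c2)) :=
        mul_le_mul_of_nonneg_left hr hc2.le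
      have heq : c2 * ((ε1 - ε2) / (1000 * c2)) = (ε1 - ε2) / 1000 := by
        field_simp
      linarith
    have e1 : y1 x' t - y1 x t ≤ 2 * t * |x - x'| := by
      rw [abs_sub_comm x x']
      calc y1 x' t - y1 x t ≤ |y1 x' t - y1 x t| := le_abs_self _
        _ ≤ 2 * t * |x' - x| := hLip1 t ht.le x' hx' x hx
    have e3 : 2 * t * |x - x'| < h t * (200/201) := by
      have := (mul_lt_mul_iff_right₀ (by positivity : (0:ℝ) < 2 * t)).mpr hconc.2
      have heq : 2 * t * (h t / (2.01 * t)) = h t * (200/201) := by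
        rw [show (2.01:ℝ) = 201/100 by norm_num]
        field_simp; ring
      linarith
    have hhx' := hh t ht.le x' hx'
    rw [hY1] at h1
    rw [hY1, hY2] at hhx'
    rw [hY2] at h2
    linarith
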